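/- Let (G_{kl})_{1≤k,l≤M} be mutually independent complex-valued square-integrable random variables with E[G_{kl}] = 0 and E[|G_{kl}|²] = 1/M. Let l_1,…,l_N be distinct elements of {1,…,M} with N ≤ M, and let J : S_N → ℂ be any function on the symmetric group S_N. Then E[ Σ_{σ_1,σ_2 ∈ S_N} J(σ_1 σ_2^{-1}) ∏_{k=1}^{N} conj(G_{σ_1(k), l_k}) · G_{σ_2(k), l_k} ] = (N!/M^N) · J(id), where id is the identity permutation. -/

import Mathlib

open Finset MeasureTheory ProbabilityTheory

namespace AvgProbAux

variable {Ω : Type*} [MeasurableSpace Ω] {μ : Measure Ω}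

/-- Mutual independence is preserved under a.e. modification. -/
lemma iIndepFun_ae_congr {ι : Type*} {f g : ι → Ω → ℂ}
    (hf : iIndepFun f μ) (h : ∀ i, f i =ᵐ[μ] g i) :
    iIndepFun g μ := by
  rw [iIndepFun_iff_measure_inter_preimage_eq_mul] at hf ⊢
  intro S sets H
  have hset : ∀ i : ι, ∀ s : Set ℂ, (f i ⁻¹' s : Set Ω) =ᵐ[μ] (g i ⁻¹' s) := by
    intro i s
    rw [Filter.eventuallyEq_set]
    filter_upwards [h i] with ω hω
    simp [Set.mem_preimage, hω]
  have hinter : (⋂ i ∈ S, f i ⁻¹' sets i : Set Ω) =ᵐ[μ] (⋂ i ∈ S, g i ⁻¹' sets i) := by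
    rw [Filter.eventuallyEq_set]
    have hall : ∀ᵐ ω ∂μ, ∀ i ∈ S, f i ω = g i ω :=
      (ae_ball_iff S.countable_toSet).mpr fun i _ => h i
    filter_upwards [hall] with ω hω
    simp only [Set.mem_iInter, Set.mem_preimage]
    exact ⟨fun H' i hi => hω i hi ▸ H' i hi, fun H' i hi => (hω i hi).symm ▸ H' i hi⟩
  rw [← measure_congr hinter, hf S H]
  exact Finset.prod_congr rfl fun i _ => measure_congr (hset i (sets i))

/-- Expectation of a product of two independent complex random variables. -/
lemma integral_mul_of_indepFun [IsProbabilityMeasure μ] {X Y : Ω → ℂ}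
    (h : IndepFun X Y μ) (hX : Measurable X) (hY : Measurable Y) :
    ∫ ω, X ω * Y ω ∂μ = (∫ ω, X ω ∂μ) * ∫ ω, Y ω ∂μ := by
  have hmap : μ.map (fun ω => (X ω, Y ω)) = (μ.map X).prod (μ.map Y) :=
    (indepFun_iff_map_prod_eq_prod_map_map hX.aemeasurable hY.aemeasurable).1 h
  haveI := Measure.isProbabilityMeasure_map (μ := μ) hX.aemeasurable
  haveI := Measure.isProbabilityMeasure_map (μ := μ) hY.aemeasurable
  have h1 : ∫ p : ℂ × ℂ, p.1 * p.2 ∂(μ.map (fun ω => (X ω, Y ω))) = ∫ ω, X ω * Y ω ∂μ := by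
    rw [integral_map (f := fun p : ℂ × ℂ => p.1 * p.2) (hX.aemeasurable.prodMk hY.aemeasurable)
      ((continuous_fst.mul continuous_snd).aestronglyMeasurable)]
  have h2 : ∫ x : ℂ, x ∂(μ.map X) = ∫ ω, X ω ∂μ :=
    integral_map hX.aemeasurable aestronglyMeasurable_id
  have h3 : ∫ y : ℂ, y ∂(μ.map Y) = ∫ ω, Y ω ∂μ :=
    integral_map hY.aemeasurable aestronglyMeasurable_id
  rw [← h1, hmap, integral_prod_mul (f := fun x : ℂ => x) (g := fun y : ℂ => y), h2, h3]

/-- Expectation of a finite product of mutually independent complex random variables. -/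
lemma integral_finset_prod_of_iIndepFun [IsProbabilityMeasure μ] {ι : Type*} [DecidableEq ι]
    {f : ι → Ω → ℂ} (h : iIndepFun f μ)
    (hm : ∀ i, Measurable (f i)) (hi : ∀ i, Integrable (f i) μ) (s : Finset ι) :
    Integrable (fun ω => ∏ i ∈ s, f i ω) μ ∧
      ∫ ω, ∏ i ∈ s, f i ω ∂μ = ∏ i ∈ s, ∫ ω, f i ω ∂μ := by
  induction s using Finset.induction_on with
  | empty => simp
  | @insert a s ha ih =>
    have hind : IndepFun (f a) (∏ j ∈ s, f j) μ :=
      (iIndepFun.indepFun_finset_prod_of_notMem h hm ha).symm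
    have hpa : (∏ j ∈ s, f j) = fun ω => ∏ j ∈ s, f j ω := by
      funext ω; exact Finset.prod_apply ω s f
    have hYint : Integrable (∏ j ∈ s, f j) μ := by rw [hpa]; exact ih.1
    have hind' : IndepFun (f a) (fun ω => ∏ j ∈ s, f j ω) μ := by rw [← hpa]; exact hind
    have hYm : Measurable (fun ω => ∏ j ∈ s, f j ω) :=
      Finset.measurable_prod s fun j _ => hm j
    constructor
    · have h2 : Integrable (f a * ∏ j ∈ s, f j) μ := hind.integrable_mul (hi a) hYint
      refine h2.congr (Filter.Eventually.of_forall fun ω => ?_)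
      simp [Finset.prod_insert ha, Finset.prod_apply]
    · simp only [Finset.prod_insert ha]
      rw [integral_mul_of_indepFun hind' (hm a) hYm, ih.2]

/-- Main computation, assuming in addition that all the variables are measurable. -/
theorem key {Ω : Type*} [MeasurableSpace Ω] (μ : Measure Ω) [IsProbabilityMeasure μ]
    (M N : ℕ) (hNM : N ≤ M) (G : Fin M → Fin M → Ω → ℂ)
    (hindep : iIndepFun
      (fun p : Fin M × Fin M => G p.1 p.2) μ)
    (hmeas : ∀ k l, Measurable (G k l))
    (hL2 : ∀ k l, MemLp (G k l) 2 μ)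
    (hmean : ∀ k l, ∫ ω, G k l ω ∂μ = 0)
    (hvar : ∀ k l, ∫ ω, ‖G k l ω‖ ^ 2 ∂μ = 1 / (M : ℝ))
    (l : Fin N → Fin M) (hl : Function.Injective l)
    (J : Equiv.Perm (Fin N) → ℂ) :
    ∫ ω, ∑ σ₁ : Equiv.Perm (Fin N), ∑ σ₂ : Equiv.Perm (Fin N),
        J (σ₁ * σ₂⁻¹) * ∏ k : Fin N,
          (starRingEnd ℂ) (G (Fin.castLE hNM (σ₁ k)) (l k) ω) *
            G (Fin.castLE hNM (σ₂ k)) (l k) ω ∂μ =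
      ((N.factorial : ℂ) / (M : ℂ) ^ N) * J 1 := by
  classical
  set A : Equiv.Perm (Fin N) → Finset (Fin M × Fin M) :=
    fun σ => Finset.image (fun k => (Fin.castLE hNM (σ k), l k)) Finset.univ with hA
  have injA : ∀ σ : Equiv.Perm (Fin N),
      Function.Injective (fun k : Fin N => (Fin.castLE hNM (σ k), l k)) := by
    intro σ k k' h
    exact hl (congrArg Prod.snd h)
  have main : ∀ σ₁ σ₂ : Equiv.Perm (Fin N),
      Integrable (fun ω => ∏ k : Fin N,
        (starRingEnd ℂ) (G (Fin.castLE hNM (σ₁ k)) (l k) ω) *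
          G (Fin.castLE hNM (σ₂ k)) (l k) ω) μ ∧
      ∫ ω, ∏ k : Fin N,
        (starRingEnd ℂ) (G (Fin.castLE hNM (σ₁ k)) (l k) ω) *
          G (Fin.castLE hNM (σ₂ k)) (l k) ω ∂μ =
        (if σ₁ = σ₂ then (((1 : ℝ) / (M : ℝ) : ℝ) : ℂ) ^ N else 0) := by
    intro σ₁ σ₂
    set φ : Fin M × Fin M → ℂ → ℂ := fun p z =>
      (if p ∈ A σ₁ then (starRingEnd ℂ) z else 1) * (if p ∈ A σ₂ then z else 1) with hφ
    set F : Fin M × Fin M → Ω → ℂ := fun p => φ p ∘ (fun ω => G p.1 p.2 ω) with hF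
    have hconjm : Measurable fun z : ℂ => (starRingEnd ℂ) z := RCLike.continuous_conj.measurable
    have hφm : ∀ p, Measurable (φ p) := by
      intro p
      by_cases h1 : p ∈ A σ₁ <;> by_cases h2 : p ∈ A σ₂ <;>
          simp only [hφ, h1, h2, if_true, if_false, mul_one, one_mul]
      · exact hconjm.mul measurable_id'
      · exact hconjm
      · exact measurable_id'
      · exact measurable_const
    have hFind : iIndepFun F μ := hindep.comp φ hφm
    have hFm : ∀ p, Measurable (F p) := fun p => (hφm p).comp (hmeas p.1 p.2)
    have hconjmul : ∀ z : ℂ, (starRingEnd ℂ) z * z = ((‖z‖ ^ 2 : ℝ) : ℂ) := by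
      intro z
      simpa using RCLike.conj_mul z
    have hFint : ∀ p : Fin M × Fin M, Integrable (F p) μ := by
      intro p
      have hone : Integrable (G p.1 p.2) μ := (hL2 p.1 p.2).integrable one_le_two
      have hsq : Integrable (fun ω => ((‖G p.1 p.2 ω‖ ^ 2 : ℝ) : ℂ)) μ :=
        ((memLp_two_iff_integrable_sq_norm (hL2 p.1 p.2).1).1 (hL2 p.1 p.2)).ofReal
      have hconj : Integrable (fun ω => (starRingEnd ℂ) (G p.1 p.2 ω)) μ := by
        refine hone.norm.mono'
          (RCLike.continuous_conj.comp_aestronglyMeasurable hone.1) ?_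
        exact Filter.Eventually.of_forall fun ω => by simp
      by_cases h1 : p ∈ A σ₁ <;> by_cases h2 : p ∈ A σ₂ <;>
        simp only [hF, hφ, Function.comp_def, h1, h2, if_true, if_false, mul_one, one_mul]
      · exact hsq.congr (Filter.Eventually.of_forall fun ω => (hconjmul _).symm)
      · exact hconj
      · exact hone
      · exact integrable_const 1
    have hprod_eq : (fun ω => ∏ k : Fin N,
        (starRingEnd ℂ) (G (Fin.castLE hNM (σ₁ k)) (l k) ω) *
          G (Fin.castLE hNM (σ₂ k)) (l k) ω) =
        fun ω => ∏ p ∈ A σ₁ ∪ A σ₂, F p ω := by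
      funext ω
      rw [Finset.prod_mul_distrib]
      have e1 : ∏ p ∈ A σ₁, (starRingEnd ℂ) (G p.1 p.2 ω)
          = ∏ k : Fin N, (starRingEnd ℂ) (G (Fin.castLE hNM (σ₁ k)) (l k) ω) :=
        Finset.prod_image (f := fun p : Fin M × Fin M => (starRingEnd ℂ) (G p.1 p.2 ω))
          (fun k _ k' _ h => injA σ₁ h)
      have e2 : ∏ p ∈ A σ₂, G p.1 p.2 ω
          = ∏ k : Fin N, G (Fin.castLE hNM (σ₂ k)) (l k) ω :=
        Finset.prod_image (f := fun p : Fin M × Fin M => G p.1 p.2 ω)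
          (fun k _ k' _ h => injA σ₂ h)
      have e3 : ∏ p ∈ A σ₁ ∪ A σ₂, F p ω
          = (∏ p ∈ A σ₁ ∪ A σ₂, (if p ∈ A σ₁ then (starRingEnd ℂ) (G p.1 p.2 ω) else 1)) *
            ∏ p ∈ A σ₁ ∪ A σ₂, (if p ∈ A σ₂ then G p.1 p.2 ω else 1) := by
        rw [← Finset.prod_mul_distrib]
        exact Finset.prod_congr rfl fun p _ => rfl
      rw [← e1, ← e2, e3, Finset.prod_ite_mem, Finset.prod_ite_mem,
        Finset.union_inter_cancel_left, Finset.union_inter_cancel_right]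
    have hP := integral_finset_prod_of_iIndepFun hFind hFm hFint (A σ₁ ∪ A σ₂)
    have hval_both : ∀ p, p ∈ A σ₁ → p ∈ A σ₂ →
        ∫ ω, F p ω ∂μ = (((1 : ℝ) / (M : ℝ) : ℝ) : ℂ) := by
      intro p h1 h2
      have hFp : F p = fun ω => ((‖G p.1 p.2 ω‖ ^ 2 : ℝ) : ℂ) := by
        funext ω
        simp only [hF, hφ, Function.comp_def, h1, h2, if_true]
        exact hconjmul _
      rw [show ∫ ω, F p ω ∂μ = ∫ ω, ((‖G p.1 p.2 ω‖ ^ 2 : ℝ) : ℂ) ∂μ from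
        integral_congr_ae (Filter.Eventually.of_forall fun ω => congrFun hFp ω)]
      exact (integral_ofReal (𝕜 := ℂ) (f := fun ω => ‖G p.1 p.2 ω‖ ^ 2) (μ := μ)).trans
        (by rw [hvar])
    constructor
    · rw [hprod_eq]; exact hP.1
    · rw [hprod_eq, hP.2]
      by_cases hσ : σ₁ = σ₂
      · subst hσ
        rw [if_pos rfl, Finset.union_self]
        rw [Finset.prod_congr rfl (fun p hp => hval_both p hp hp), Finset.prod_const]
        congr 1
        rw [hA]
        rw [Finset.card_image_of_injective _ (injA σ₁), Finset.card_univ, Fintype.card_fin]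
      · rw [if_neg hσ]
        have : ∃ k, σ₁ k ≠ σ₂ k := by
          by_contra h
          push_neg at h
          exact hσ (Equiv.ext h)
        obtain ⟨k, hk⟩ := this
        set p : Fin M × Fin M := (Fin.castLE hNM (σ₁ k), l k) with hp
        have hp1 : p ∈ A σ₁ := Finset.mem_image_of_mem _ (Finset.mem_univ k)
        have hp2 : p ∉ A σ₂ := by
          intro hmem
          rw [hA, Finset.mem_image] at hmem
          obtain ⟨k', _, hk'⟩ := hmem
          have hk'k : k' = k := hl (congrArg Prod.snd hk')
          subst hk'k
          exact hk ((Fin.castLE_injective hNM (congrArg Prod.fst hk')).symm)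
        refine Finset.prod_eq_zero (Finset.mem_union_left _ hp1) ?_
        have hFp : F p = fun ω => (starRingEnd ℂ) (G p.1 p.2 ω) := by
          funext ω
          simp only [hF, hφ, Function.comp_def, hp1, hp2, if_true, if_false, mul_one]
        rw [show ∫ ω, F p ω ∂μ = ∫ ω, (starRingEnd ℂ) (G p.1 p.2 ω) ∂μ from
          integral_congr_ae (Filter.Eventually.of_forall fun ω => congrFun hFp ω),
          integral_conj, hmean, map_zero]
  have hterm_int : ∀ σ₁ σ₂ : Equiv.Perm (Fin N),
      Integrable (fun ω => J (σ₁ * σ₂⁻¹) * ∏ k : Fin N,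
        (starRingEnd ℂ) (G (Fin.castLE hNM (σ₁ k)) (l k) ω) *
          G (Fin.castLE hNM (σ₂ k)) (l k) ω) μ :=
    fun σ₁ σ₂ => ((main σ₁ σ₂).1).const_mul _
  rw [integral_finset_sum _ (fun σ₁ _ => integrable_finset_sum _ (fun σ₂ _ => hterm_int σ₁ σ₂))]
  have step : ∀ σ₁ : Equiv.Perm (Fin N),
      ∫ ω, ∑ σ₂ : Equiv.Perm (Fin N), J (σ₁ * σ₂⁻¹) * ∏ k : Fin N,
        (starRingEnd ℂ) (G (Fin.castLE hNM (σ₁ k)) (l k) ω) *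
          G (Fin.castLE hNM (σ₂ k)) (l k) ω ∂μ
      = ∑ σ₂ : Equiv.Perm (Fin N), J (σ₁ * σ₂⁻¹) *
          (if σ₁ = σ₂ then (((1 : ℝ) / (M : ℝ) : ℝ) : ℂ) ^ N else 0) := by
    intro σ₁
    rw [integral_finset_sum _ (fun σ₂ _ => hterm_int σ₁ σ₂)]
    refine Finset.sum_congr rfl fun σ₂ _ => ?_
    rw [show (fun ω => J (σ₁ * σ₂⁻¹) * ∏ k : Fin N,
        (starRingEnd ℂ) (G (Fin.castLE hNM (σ₁ k)) (l k) ω) *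
          G (Fin.castLE hNM (σ₂ k)) (l k) ω) = fun ω => J (σ₁ * σ₂⁻¹) • (∏ k : Fin N,
        (starRingEnd ℂ) (G (Fin.castLE hNM (σ₁ k)) (l k) ω) *
          G (Fin.castLE hNM (σ₂ k)) (l k) ω) from rfl, integral_smul, (main σ₁ σ₂).2,
      smul_eq_mul]
  rw [Finset.sum_congr rfl fun σ₁ _ => step σ₁]
  have inner : ∀ σ₁ : Equiv.Perm (Fin N),
      (∑ σ₂ : Equiv.Perm (Fin N), J (σ₁ * σ₂⁻¹) *
        (if σ₁ = σ₂ then (((1 : ℝ) / (M : ℝ) : ℝ) : ℂ) ^ N else 0))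
      = J 1 * (((1 : ℝ) / (M : ℝ) : ℝ) : ℂ) ^ N := by
    intro σ₁
    rw [Finset.sum_congr rfl (fun σ₂ _ => by rw [mul_ite_zero]), Finset.sum_ite_eq,
      if_pos (Finset.mem_univ σ₁)]
    simp
  rw [Finset.sum_congr rfl fun σ₁ _ => inner σ₁, Finset.sum_const, Finset.card_univ,
    Fintype.card_perm, Fintype.card_fin, nsmul_eq_mul]
  have hc : (((1 : ℝ) / (M : ℝ) : ℝ) : ℂ) = 1 / (M : ℂ) := by push_cast; ring
  rw [hc, div_pow, one_pow]
  ring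

end AvgProbAux

/-- **Average output probability with an arbitrary distinguishability function.**
Let `(G k l)` be mutually independent square-integrable complex random variables with
`E[G k l] = 0` and `E[|G k l|²] = 1/M`, let `l₁,…,l_N` be distinct elements of
`{1,…,M}` with `N ≤ M`, and let `J : S_N → ℂ` be any function.  Then
`E[Σ_{σ₁,σ₂ ∈ S_N} J(σ₁σ₂⁻¹) ∏_k conj(G_{σ₁(k),l_k}) G_{σ₂(k),l_k}] = (N!/M^N)·J(id)`. -/
theorem average_probability_partial_distinguishability
    {Ω : Type*} [MeasurableSpace Ω] (μ : Measure Ω) [IsProbabilityMeasure μ]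
    (M N : ℕ) (hNM : N ≤ M) (G : Fin M → Fin M → Ω → ℂ)
    (hindep : iIndepFun
      (fun p : Fin M × Fin M => G p.1 p.2) μ)
    (hL2 : ∀ k l, MemLp (G k l) 2 μ)
    (hmean : ∀ k l, ∫ ω, G k l ω ∂μ = 0)
    (hvar : ∀ k l, ∫ ω, ‖G k l ω‖ ^ 2 ∂μ = 1 / (M : ℝ))
    (l : Fin N → Fin M) (hl : Function.Injective l)
    (J : Equiv.Perm (Fin N) → ℂ) :
    ∫ ω, ∑ σ₁ : Equiv.Perm (Fin N), ∑ σ₂ : Equiv.Perm (Fin N),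
        J (σ₁ * σ₂⁻¹) * ∏ k : Fin N,
          (starRingEnd ℂ) (G (Fin.castLE hNM (σ₁ k)) (l k) ω) *
            G (Fin.castLE hNM (σ₂ k)) (l k) ω ∂μ =
      ((N.factorial : ℂ) / (M : ℂ) ^ N) * J 1 := by
  classical
  set G' : Fin M → Fin M → Ω → ℂ := fun k l' => ((hL2 k l').1.mk (G k l')) with hG'
  have hae : ∀ k l', G k l' =ᵐ[μ] G' k l' := fun k l' => (hL2 k l').1.ae_eq_mk
  have hmeas' : ∀ k l', Measurable (G' k l') := fun k l' =>
    (hL2 k l').1.stronglyMeasurable_mk.measurable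
  have hindep' : iIndepFun
      (fun p : Fin M × Fin M => G' p.1 p.2) μ :=
    AvgProbAux.iIndepFun_ae_congr hindep (fun p => hae p.1 p.2)
  have hL2' : ∀ k l', MemLp (G' k l') 2 μ := fun k l' => (hL2 k l').ae_eq (hae k l')
  have hmean' : ∀ k l', ∫ ω, G' k l' ω ∂μ = 0 := fun k l' =>
    (integral_congr_ae (hae k l')).symm.trans (hmean k l')
  have hvar' : ∀ k l', ∫ ω, ‖G' k l' ω‖ ^ 2 ∂μ = 1 / (M : ℝ) := fun k l' =>
    (integral_congr_ae (((hae k l').symm).fun_comp (fun z : ℂ => ‖z‖ ^ 2))).trans (hvar k l')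
  have haeall : ∀ᵐ ω ∂μ, ∀ k l', G k l' ω = G' k l' ω := by
    rw [ae_all_iff]
    intro k
    rw [ae_all_iff]
    intro l'
    exact hae k l'
  have heq : ∫ ω, ∑ σ₁ : Equiv.Perm (Fin N), ∑ σ₂ : Equiv.Perm (Fin N),
        J (σ₁ * σ₂⁻¹) * ∏ k : Fin N,
          (starRingEnd ℂ) (G (Fin.castLE hNM (σ₁ k)) (l k) ω) *
            G (Fin.castLE hNM (σ₂ k)) (l k) ω ∂μ
      = ∫ ω, ∑ σ₁ : Equiv.Perm (Fin N), ∑ σ₂ : Equiv.Perm (Fin N),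
        J (σ₁ * σ₂⁻¹) * ∏ k : Fin N,
          (starRingEnd ℂ) (G' (Fin.castLE hNM (σ₁ k)) (l k) ω) *
            G' (Fin.castLE hNM (σ₂ k)) (l k) ω ∂μ := by
    refine integral_congr_ae ?_
    filter_upwards [haeall] with ω hω
    simp only [hω]
  rw [heq]
  exact AvgProbAux.key μ M N hNM G' hindep' hmeas' hL2' hmean' hvar' l hl J
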